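/- arXiv:1410.2386 — 4 statements merged into one kernel-verified Lean document; each statement's English description precedes it below -/
import Mathlib

section
/- Let {A⁽ⁿ⁾}ₙ₌₁ᴺ be random matrices, A⁽ⁿ⁾ ∈ ℝ^{Iₙ×R}, such that the matrices are mutually independent and, within each A⁽ⁿ⁾, the row vectors a⁽ⁿ⁾_{iₙ} are independent. Then E[(⊙ₙ A⁽ⁿ⁾)ᵀ(⊙ₙ A⁽ⁿ⁾)] = Σ_{i₁,…,i_N} ⊛ₙ E[a⁽ⁿ⁾_{iₙ} a⁽ⁿ⁾ᵀ_{iₙ}], where the sum ranges over all index tuples and ⊛ denotes the Hadamard product of R×R matrices. -/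
open MeasureTheory ProbabilityTheory

lemma aux_indep_prod_integral {Ω ι : Type*} [MeasurableSpace Ω] {μ : Measure Ω}
    [IsProbabilityMeasure μ] {f : ι → Ω → ℝ}
    (hindep : iIndepFun f μ)
    (hmeas : ∀ i, Measurable (f i)) (hint : ∀ i, Integrable (f i) μ)
    (s : Finset ι) :
    Integrable (fun ω => ∏ i ∈ s, f i ω) μ ∧
      (∫ ω, ∏ i ∈ s, f i ω ∂μ) = ∏ i ∈ s, ∫ ω, f i ω ∂μ := by
  classical
  induction s using Finset.induction with
  | empty => simp
  | @insert a s ha ih =>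
      have hIndep : IndepFun (∏ j ∈ s, f j) (f a) μ :=
        hindep.indepFun_finsetProd_of_notMem hmeas ha
      have hps : Integrable (∏ j ∈ s, f j) μ := by
        have := ih.1
        have he : (∏ j ∈ s, f j) = fun ω => ∏ i ∈ s, f i ω := by
          funext ω; simp [Finset.prod_apply]
        rw [he]; exact this
      have hmul : Integrable ((∏ j ∈ s, f j) * f a) μ :=
        hIndep.integrable_mul hps (hint a)
      have hint_eq : (∫ ω, ((∏ j ∈ s, f j) * f a) ω ∂μ)
          = (∫ ω, (∏ j ∈ s, f j) ω ∂μ) * ∫ ω, f a ω ∂μ :=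
        hIndep.integral_mul_eq_mul_integral hps.aestronglyMeasurable (hint a).aestronglyMeasurable
      constructor
      · have : (fun ω => ∏ i ∈ insert a s, f i ω) = (∏ j ∈ s, f j) * f a := by
          funext ω
          simp [Finset.prod_insert ha, Finset.prod_apply, mul_comm]
        rw [this]; exact hmul
      · have h1 : (∫ ω, ∏ i ∈ insert a s, f i ω ∂μ)
            = (∫ ω, ((∏ j ∈ s, f j) * f a) ω ∂μ) := by
          congr 1; funext ω
          simp [Finset.prod_insert ha, Finset.prod_apply, mul_comm]
        rw [h1, hint_eq, Finset.prod_insert ha]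
        have := ih.2
        rw [mul_comm]
        congr 1
        simpa [Finset.prod_apply] using this

/-- Lemma 1: for mutually independent random factor matrices with independent rows,
the expected Gram matrix of their iterated Khatri-Rao product equals the sum over all
index tuples of the Hadamard products of the expected row outer products. -/
theorem expected_khatriRao_gram
    {Ω : Type*} [MeasurableSpace Ω] (μ : Measure Ω) [IsProbabilityMeasure μ]
    {N R : ℕ} {I : Fin N → ℕ}
    (A : ∀ n, Ω → Fin (I n) → Fin R → ℝ)
    (hmeas : ∀ n, Measurable (A n))
    (hindep : iIndepFun A μ)
    (hrows : ∀ n, iIndepFun (fun i ω => A n ω i) μ)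
    (hint : ∀ n (i : Fin (I n)) (r s : Fin R),
      Integrable (fun ω => A n ω i r * A n ω i s) μ) :
    ∀ r s : Fin R,
      (∫ ω, ∑ i : ∀ n, Fin (I n), ∏ n, (A n ω (i n) r * A n ω (i n) s) ∂μ)
        = ∑ i : ∀ n, Fin (I n), ∏ n, ∫ ω, A n ω (i n) r * A n ω (i n) s ∂μ := by
  intro r s
  classical
  have key : ∀ i : ∀ n, Fin (I n),
      Integrable (fun ω => ∏ n, (A n ω (i n) r * A n ω (i n) s)) μ ∧
        (∫ ω, ∏ n, (A n ω (i n) r * A n ω (i n) s) ∂μ)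
          = ∏ n, ∫ ω, A n ω (i n) r * A n ω (i n) s ∂μ := by
    intro i
    have hindep' : iIndepFun
        (fun n ω => A n ω (i n) r * A n ω (i n) s) μ := by
      have := hindep.comp (g := fun n (x : Fin (I n) → Fin R → ℝ) => x (i n) r * x (i n) s)
        (fun n => by measurability)
      exact this
    exact aux_indep_prod_integral hindep'
      (fun n => by
        have : Measurable (fun ω => A n ω (i n) r * A n ω (i n) s) :=
          ((hmeas n).eval.eval).mul ((hmeas n).eval.eval)
        exact this)
      (fun n => hint n (i n) r s) Finset.univ
  rw [integral_finset_sum _ (fun i _ => (key i).1)]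
  exact Finset.sum_congr rfl fun i _ => (key i).2
end

section
/- Let {A⁽ⁿ⁾}ₙ₌₁ᴺ be mutually independent random matrices A⁽ⁿ⁾ ∈ ℝ^{Iₙ×R} whose rows within each matrix are independent. Then E[ ‖⟦A⁽¹⁾,…,A⁽ᴺ⁾⟧‖²_F ] = Σ_{i₁,…,i_N} ⟨ E[a⁽¹⁾_{i₁} a⁽¹⁾ᵀ_{i₁}], …, E[a⁽ᴺ⁾_{i_N} a⁽ᴺ⁾ᵀ_{i_N}] ⟩, where ⟨·,…,·⟩ denotes the generalized inner product (sum of entrywise products) of the N matrices. -/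
open MeasureTheory ProbabilityTheory

lemma aux_integrable_prod {Ω : Type*} [MeasurableSpace Ω] {μ : Measure Ω}
    [IsProbabilityMeasure μ] {ι : Type*} {g : ι → Ω → ℝ}
    (hindep : iIndepFun g μ)
    (hmeas : ∀ n, Measurable (g n)) (hint : ∀ n, Integrable (g n) μ)
    (s : Finset ι) : Integrable (fun ω => ∏ n ∈ s, g n ω) μ := by
  classical
  induction s using Finset.induction_on with
  | empty => simpa using integrable_const (1 : ℝ)
  | @insert a s ha ih =>
    have hsep : IndepFun (fun ω => ∏ n ∈ s, g n ω) (g a) μ := by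
      have h := hindep.indepFun_finsetProd_of_notMem hmeas ha
      have he : (∏ j ∈ s, g j) = fun ω => ∏ n ∈ s, g n ω := by
        funext ω; simp [Finset.prod_apply]
      rwa [he] at h
    have := (hsep.symm).integrable_mul (hint a) ih
    simpa [Finset.prod_insert ha, Pi.mul_def] using this

lemma aux_integral_prod {Ω : Type*} [MeasurableSpace Ω] {μ : Measure Ω}
    [IsProbabilityMeasure μ] {ι : Type*} {g : ι → Ω → ℝ}
    (hindep : iIndepFun g μ)
    (hmeas : ∀ n, Measurable (g n)) (hint : ∀ n, Integrable (g n) μ)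
    (s : Finset ι) : ∫ ω, ∏ n ∈ s, g n ω ∂μ = ∏ n ∈ s, ∫ ω, g n ω ∂μ := by
  classical
  induction s using Finset.induction_on with
  | empty => simp
  | @insert a s ha ih =>
    have hsep : IndepFun (fun ω => ∏ n ∈ s, g n ω) (g a) μ := by
      have h := hindep.indepFun_finsetProd_of_notMem hmeas ha
      have he : (∏ j ∈ s, g j) = fun ω => ∏ n ∈ s, g n ω := by
        funext ω; simp [Finset.prod_apply]
      rwa [he] at h
    have hmul := (hsep.symm).integral_fun_mul_eq_mul_integral (hint a).aestronglyMeasurable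
      (aux_integrable_prod hindep hmeas hint s).aestronglyMeasurable
    simp only [Finset.prod_insert ha]
    rw [show (∫ ω, g a ω * ∏ n ∈ s, g n ω ∂μ)
        = (∫ ω, g a ω ∂μ) * ∫ ω, ∏ n ∈ s, g n ω ∂μ from hmul, ih]

/-- Lemma 2: for mutually independent random factor matrices with independent rows, the
expected squared Frobenius norm of the CP tensor equals the sum over all index tuples of
the generalized inner products of the expected row outer products. -/
theorem expected_cp_frobenius_sq
    {Ω : Type*} [MeasurableSpace Ω] (μ : Measure Ω) [IsProbabilityMeasure μ]
    {N R : ℕ} {I : Fin N → ℕ}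
    (A : ∀ n, Ω → Fin (I n) → Fin R → ℝ)
    (hmeas : ∀ n, Measurable (A n))
    (hindep : iIndepFun A μ)
    (hrows : ∀ n, iIndepFun (fun i ω => A n ω i) μ)
    (hint : ∀ n (i : Fin (I n)) (r s : Fin R),
      Integrable (fun ω => A n ω i r * A n ω i s) μ) :
    (∫ ω, ∑ i : ∀ n, Fin (I n), (∑ r : Fin R, ∏ n, A n ω (i n) r) ^ 2 ∂μ)
      = ∑ i : ∀ n, Fin (I n), ∑ r : Fin R, ∑ s : Fin R,
          ∏ n, ∫ ω, A n ω (i n) r * A n ω (i n) s ∂μ := by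
  classical
  -- independence of the per-factor products
  have hgind : ∀ (i : ∀ n, Fin (I n)) (r s : Fin R),
      iIndepFun
        (fun n ω => A n ω (i n) r * A n ω (i n) s) μ := by
    intro i r s
    exact hindep.comp (fun n x => x (i n) r * x (i n) s)
      (fun n => by measurability)
  have hgmeas : ∀ (i : ∀ n, Fin (I n)) (r s : Fin R) (n : Fin N),
      Measurable (fun ω => A n ω (i n) r * A n ω (i n) s) := by
    intro i r s n
    exact ((hmeas n).eval.eval.mul (hmeas n).eval.eval)
  -- rewrite the integrand
  have hrw : ∀ ω, (∑ i : ∀ n, Fin (I n), (∑ r : Fin R, ∏ n, A n ω (i n) r) ^ 2)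
      = ∑ i : ∀ n, Fin (I n), ∑ r : Fin R, ∑ s : Fin R,
          ∏ n, (A n ω (i n) r * A n ω (i n) s) := by
    intro ω
    refine Finset.sum_congr rfl fun i _ => ?_
    rw [sq, Finset.sum_mul_sum]
    exact Finset.sum_congr rfl fun r _ => Finset.sum_congr rfl fun s _ => by
      rw [← Finset.prod_mul_distrib]
  simp_rw [hrw]
  rw [integral_finset_sum]
  · refine Finset.sum_congr rfl fun i _ => ?_
    rw [integral_finset_sum]
    · refine Finset.sum_congr rfl fun r _ => ?_
      rw [integral_finset_sum]
      · exact Finset.sum_congr rfl fun s _ =>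
          aux_integral_prod (hgind i r s) (hgmeas i r s) (fun n => hint n (i n) r s)
            Finset.univ
      · intro s _
        exact aux_integrable_prod (hgind i r s) (hgmeas i r s)
          (fun n => hint n (i n) r s) Finset.univ
    · intro r _
      exact integrable_finset_sum _ fun s _ =>
        aux_integrable_prod (hgind i r s) (hgmeas i r s)
          (fun n => hint n (i n) r s) Finset.univ
  · intro i _
    exact integrable_finset_sum _ fun r _ => integrable_finset_sum _ fun s _ =>
      aux_integrable_prod (hgind i r s) (hgmeas i r s)
        (fun n => hint n (i n) r s) Finset.univ
end

section
/- Let {A⁽ⁿ⁾}ₙ₌₁ᴺ be mutually independent random matrices A⁽ⁿ⁾ ∈ ℝ^{Iₙ×R} such that within each A⁽ⁿ⁾ the rows a⁽ⁿ⁾_{iₙ} are independent with a common covariance matrix Cov[a⁽ⁿ⁾_{iₙ}] = V⁽ⁿ⁾ for all iₙ. Then E[(⊙ₙ A⁽ⁿ⁾)ᵀ(⊙ₙ A⁽ⁿ⁾)] = ⊛ₙ E[A⁽ⁿ⁾ᵀA⁽ⁿ⁾], where E[A⁽ⁿ⁾ᵀA⁽ⁿ⁾] = E[A⁽ⁿ⁾]ᵀ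 E[A⁽ⁿ⁾] + Iₙ·V⁽ⁿ⁾. -/
open MeasureTheory ProbabilityTheory

lemma indep_integral_prod {Ω : Type*} [MeasurableSpace Ω] {μ : Measure Ω}
    [IsProbabilityMeasure μ] {ι : Type*} [DecidableEq ι] (g : ι → Ω → ℝ)
    (hindep : iIndepFun g μ)
    (hmeas : ∀ i, Measurable (g i)) (hint : ∀ i, Integrable (g i) μ)
    (s : Finset ι) :
    Integrable (fun ω => ∏ i ∈ s, g i ω) μ ∧
      (∫ ω, ∏ i ∈ s, g i ω ∂μ) = ∏ i ∈ s, ∫ ω, g i ω ∂μ := by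
  classical
  induction s using Finset.induction with
  | empty => simp [integrable_const]
  | @insert a s ha ih =>
    obtain ⟨ih1, ih2⟩ := ih
    have hind : IndepFun (∏ j ∈ s, g j) (g a) μ :=
      hindep.indepFun_finsetProd_of_notMem hmeas ha
    have hprodfun : (∏ j ∈ s, g j) = fun ω => ∏ j ∈ s, g j ω := by
      funext ω; simp
    have hint' : Integrable ((∏ j ∈ s, g j) * g a) μ := by
      refine hind.integrable_mul ?_ (hint a)
      rw [hprodfun]; exact ih1
    have heq : (fun ω => ∏ i ∈ insert a s, g i ω)
        = (∏ j ∈ s, g j) * g a := by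
      funext ω; simp [Finset.prod_insert ha, mul_comm]
    constructor
    · rw [heq]; exact hint'
    · rw [heq]
      have := hind.integral_mul_eq_mul_integral (by rw [hprodfun]; exact ih1.aestronglyMeasurable) (hint a).aestronglyMeasurable
      rw [this, Finset.prod_insert ha, hprodfun]
      rw [show integral μ (g a) = ∫ ω, g a ω ∂μ from rfl, ih2]; ring


/-- Lemma 3: for mutually independent random factor matrices whose rows within each
matrix are independent with a common covariance `V n`, the expected Gram matrix of
their iterated Khatri-Rao product is the Hadamard product of the expected Gram
matrices, and `E[AᵀA] = E[A]ᵀE[A] + Iₙ·V`. -/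
theorem expected_khatriRao_gram_common_cov
    {Ω : Type*} [MeasurableSpace Ω] (μ : Measure Ω) [IsProbabilityMeasure μ]
    {N R : ℕ} {I : Fin N → ℕ}
    (A : ∀ n, Ω → Fin (I n) → Fin R → ℝ)
    (V : ∀ _ : Fin N, Matrix (Fin R) (Fin R) ℝ)
    (hmeas : ∀ n, Measurable (A n))
    (hindep : iIndepFun A μ)
    (hrows : ∀ n, iIndepFun (fun i ω => A n ω i) μ)
    (hint : ∀ n (i : Fin (I n)) (r s : Fin R),
      Integrable (fun ω => A n ω i r * A n ω i s) μ)
    (hcov : ∀ n (i : Fin (I n)) (r s : Fin R),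
      ∫ ω, (A n ω i r - ∫ ω', A n ω' i r ∂μ) * (A n ω i s - ∫ ω', A n ω' i s ∂μ) ∂μ
        = V n r s) :
    (∀ n (r s : Fin R),
      (∫ ω, ∑ i : Fin (I n), A n ω i r * A n ω i s ∂μ)
        = (∑ i : Fin (I n), (∫ ω, A n ω i r ∂μ) * ∫ ω, A n ω i s ∂μ)
            + (I n : ℝ) * V n r s)
    ∧ ∀ r s : Fin R,
      (∫ ω, ∑ i : ∀ n, Fin (I n), ∏ n, (A n ω (i n) r * A n ω (i n) s) ∂μ)
        = ∏ n, ∫ ω, ∑ i : Fin (I n), A n ω i r * A n ω i s ∂μ := by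
  -- integrability of single entries
  have hmeas1 : ∀ n (i : Fin (I n)) (r : Fin R), Measurable (fun ω => A n ω i r) :=
    fun n i r => ((measurable_pi_apply r).comp ((measurable_pi_apply i).comp (hmeas n)))
  have hint1 : ∀ n (i : Fin (I n)) (r : Fin R), Integrable (fun ω => A n ω i r) μ := by
    intro n i r
    have h2 : Integrable (fun ω => (A n ω i r * A n ω i r + 1) / 2) μ :=
      (((hint n i r r).add (integrable_const 1)).div_const 2)
    refine h2.mono' (hmeas1 n i r).aestronglyMeasurable ?_
    filter_upwards with ω
    rw [Real.norm_eq_abs]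
    nlinarith [sq_nonneg (|A n ω i r| - 1), sq_abs (A n ω i r), abs_nonneg (A n ω i r)]
  -- entrywise second moment identity
  have key : ∀ n (i : Fin (I n)) (r s : Fin R),
      (∫ ω, A n ω i r * A n ω i s ∂μ)
        = (∫ ω, A n ω i r ∂μ) * (∫ ω, A n ω i s ∂μ) + V n r s := by
    intro n i r s
    set a := ∫ ω, A n ω i r ∂μ with ha
    set b := ∫ ω, A n ω i s ∂μ with hb
    have hexp : (fun ω => (A n ω i r - a) * (A n ω i s - b))
        = fun ω => A n ω i r * A n ω i s - a * A n ω i s - b * A n ω i r + a * b := by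
      funext ω; ring
    have hca := hcov n i r s
    rw [← ha, ← hb, hexp] at hca
    have i2 : Integrable (fun ω => A n ω i r * A n ω i s - a * A n ω i s) μ :=
      (hint n i r s).sub ((hint1 n i s).const_mul a)
    have i3 : Integrable (fun ω => A n ω i r * A n ω i s - a * A n ω i s - b * A n ω i r) μ :=
      i2.sub ((hint1 n i r).const_mul b)
    rw [integral_add i3 (integrable_const _),
      integral_sub i2 ((hint1 n i r).const_mul b),
      integral_sub (hint n i r s) ((hint1 n i s).const_mul a),
      integral_const_mul, integral_const_mul, integral_const] at hca
    simp only [measure_univ, probReal_univ, ENNReal.toReal_one, smul_eq_mul, one_mul] at hca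
    rw [← ha, ← hb] at hca
    linarith
  constructor
  · intro n r s
    rw [integral_finset_sum _ (fun i _ => hint n i r s)]
    have : ∀ i : Fin (I n), (∫ ω, A n ω i r * A n ω i s ∂μ)
        = (∫ ω, A n ω i r ∂μ) * (∫ ω, A n ω i s ∂μ) + V n r s := fun i => key n i r s
    rw [Finset.sum_congr rfl (fun i _ => this i), Finset.sum_add_distrib]
    simp [Finset.sum_const, mul_comm]
  · intro r s
    set g : Fin N → Ω → ℝ := fun n ω => ∑ i : Fin (I n), A n ω i r * A n ω i s with hg
    have hswap : ∀ ω, (∑ i : ∀ n, Fin (I n), ∏ n, (A n ω (i n) r * A n ω (i n) s))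
        = ∏ n, g n ω := by
      intro ω
      rw [Finset.prod_univ_sum]
      simp [Fintype.piFinset_univ]
    have hgmeas : ∀ n, Measurable (g n) := by
      intro n
      exact Finset.measurable_sum _ (fun i _ => (hmeas1 n i r).mul (hmeas1 n i s))
    have hgint : ∀ n, Integrable (g n) μ := fun n =>
      integrable_finset_sum _ (fun i _ => hint n i r s)
    have hgindep : iIndepFun g μ := by
      have := hindep.comp
        (g := fun n (M : Fin (I n) → Fin R → ℝ) => ∑ i : Fin (I n), M i r * M i s)
        (fun n => Finset.measurable_sum _ (fun i _ => by fun_prop))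
      exact this
    have := indep_integral_prod g hgindep hgmeas hgint Finset.univ
    calc (∫ ω, ∑ i : ∀ n, Fin (I n), ∏ n, (A n ω (i n) r * A n ω (i n) s) ∂μ)
        = ∫ ω, ∏ n, g n ω ∂μ := by
          congr 1; funext ω; exact hswap ω
      _ = ∏ n, ∫ ω, g n ω ∂μ := this.2
end

section
/- Let {A⁽ⁿ⁾}ₙ₌₁ᴺ be mutually independent random matrices whose rows within each matrix are independent. Then E[‖⟦A⁽¹⁾,…,A⁽ᴺ⁾⟧‖²_F] = ⟨ E[A⁽¹⁾ᵀA⁽¹⁾], …, E[A⁽ᴺ⁾ᵀA⁽ᴺ⁾] ⟩, the generalized inner product (sum of entrywise products) of the expected Gram matrices. -/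
open MeasureTheory ProbabilityTheory

private lemma integral_prod_of_iIndepFun
    {Ω ι : Type*} [MeasurableSpace Ω] {μ : Measure Ω} [IsProbabilityMeasure μ]
    (f : ι → Ω → ℝ) (hindep : iIndepFun f μ)
    (hmeas : ∀ i, Measurable (f i)) (hint : ∀ i, Integrable (f i) μ)
    (s : Finset ι) :
    Integrable (fun ω => ∏ i ∈ s, f i ω) μ ∧
      ∫ ω, ∏ i ∈ s, f i ω ∂μ = ∏ i ∈ s, ∫ ω, f i ω ∂μ := by
  classical
  induction s using Finset.cons_induction with
  | empty => simp
  | cons i s hi ih =>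
    have hIndep : IndepFun (∏ j ∈ s, f j) (f i) μ :=
      hindep.indepFun_finsetProd_of_notMem hmeas hi
    have hprod : (fun ω => ∏ j ∈ s, f j ω) = ∏ j ∈ s, f j := by
      funext ω; simp
    have hint0 : Integrable (∏ j ∈ s, f j) μ := hprod ▸ ih.1
    have hkey : Integrable ((∏ j ∈ s, f j) * f i) μ := hIndep.integrable_mul hint0 (hint i)
    have hcons : (fun ω => ∏ x ∈ Finset.cons i s hi, f x ω) = (∏ j ∈ s, f j) * f i := by
      funext ω; rw [Finset.prod_cons, Pi.mul_apply, Finset.prod_apply, mul_comm]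
    constructor
    · rw [hcons]; exact hkey
    · have hmul := hIndep.integral_mul_eq_mul_integral hint0.aestronglyMeasurable (hint i).aestronglyMeasurable
      calc ∫ ω, ∏ x ∈ Finset.cons i s hi, f x ω ∂μ
          = ∫ ω, ((∏ j ∈ s, f j) * f i) ω ∂μ := by rw [← hcons]
        _ = (∫ ω, (∏ j ∈ s, f j) ω ∂μ) * ∫ ω, f i ω ∂μ := hmul
        _ = ∏ x ∈ Finset.cons i s hi, ∫ ω, f x ω ∂μ := by
            rw [← hprod, ih.2, Finset.prod_cons, mul_comm]

/-- Lemma 4: for mutually independent random factor matrices with independent rows, the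
expected squared Frobenius norm of the CP tensor equals the generalized inner product of
the expected Gram matrices. -/
theorem expected_cp_frobenius_sq_gram
    {Ω : Type*} [MeasurableSpace Ω] (μ : Measure Ω) [IsProbabilityMeasure μ]
    {N R : ℕ} {I : Fin N → ℕ}
    (A : ∀ n, Ω → Fin (I n) → Fin R → ℝ)
    (hmeas : ∀ n, Measurable (A n))
    (hindep : iIndepFun A μ)
    (hrows : ∀ n, iIndepFun (fun i ω => A n ω i) μ)
    (hint : ∀ n (i : Fin (I n)) (r s : Fin R),
      Integrable (fun ω => A n ω i r * A n ω i s) μ) :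
    (∫ ω, ∑ i : ∀ n, Fin (I n), (∑ r : Fin R, ∏ n, A n ω (i n) r) ^ 2 ∂μ)
      = ∑ r : Fin R, ∑ s : Fin R,
          ∏ n, ∫ ω, ∑ i : Fin (I n), A n ω i r * A n ω i s ∂μ := by
  classical
  -- the per-matrix summed function
  set g : Fin R → Fin R → ∀ n, Ω → ℝ :=
    fun r s n ω => ∑ i : Fin (I n), A n ω i r * A n ω i s with hg
  have hgmeas : ∀ r s n, Measurable (g r s n) := by
    intro r s n
    exact Finset.measurable_sum _ fun i _ =>
      ((hmeas n).eval.eval).mul ((hmeas n).eval.eval)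
  have hgint : ∀ r s n, Integrable (g r s n) μ := fun r s n =>
    integrable_finset_sum _ fun i _ => hint n i r s
  have hgindep : ∀ r s, iIndepFun (g r s) μ := by
    intro r s
    exact iIndepFun.comp (mγ := fun _ => (inferInstance : MeasurableSpace ℝ)) hindep
      (fun n (M : Fin (I n) → Fin R → ℝ) => ∑ i : Fin (I n), M i r * M i s)
      (fun n => Finset.measurable_sum _ fun i _ =>
        (by fun_prop))
  -- rewrite the integrand pointwise
  have hpt : ∀ ω, (∑ i : ∀ n, Fin (I n), (∑ r : Fin R, ∏ n, A n ω (i n) r) ^ 2)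
      = ∑ r : Fin R, ∑ s : Fin R, ∏ n, g r s n ω := by
    intro ω
    have : ∀ i : ∀ n, Fin (I n), (∑ r : Fin R, ∏ n, A n ω (i n) r) ^ 2
        = ∑ r : Fin R, ∑ s : Fin R, ∏ n, A n ω (i n) r * A n ω (i n) s := by
      intro i
      rw [sq, Finset.sum_mul_sum]
      exact Finset.sum_congr rfl fun r _ => Finset.sum_congr rfl fun s _ =>
        (Finset.prod_mul_distrib).symm
    rw [Finset.sum_congr rfl fun i _ => this i, Finset.sum_comm]
    refine Finset.sum_congr rfl fun r _ => ?_
    rw [Finset.sum_comm]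
    refine Finset.sum_congr rfl fun s _ => ?_
    simp only [hg]
    rw [Finset.prod_univ_sum]
    rw [Fintype.sum_equiv (Equiv.refl _) _ _ (fun _ => rfl)]
    rfl
  calc (∫ ω, ∑ i : ∀ n, Fin (I n), (∑ r : Fin R, ∏ n, A n ω (i n) r) ^ 2 ∂μ)
      = ∫ ω, ∑ r : Fin R, ∑ s : Fin R, ∏ n, g r s n ω ∂μ := by
        congr 1; funext ω; exact hpt ω
    _ = ∑ r : Fin R, ∑ s : Fin R, ∫ ω, ∏ n, g r s n ω ∂μ := by
        rw [integral_finset_sum]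
        · exact Finset.sum_congr rfl fun r _ => integral_finset_sum _ fun s _ =>
            (integral_prod_of_iIndepFun _ (hgindep r s) (hgmeas r s) (hgint r s)
              Finset.univ).1
        · intro r _
          exact integrable_finset_sum _ fun s _ =>
            (integral_prod_of_iIndepFun _ (hgindep r s) (hgmeas r s) (hgint r s)
              Finset.univ).1
    _ = ∑ r : Fin R, ∑ s : Fin R,
          ∏ n, ∫ ω, ∑ i : Fin (I n), A n ω i r * A n ω i s ∂μ := by
        refine Finset.sum_congr rfl fun r _ => Finset.sum_congr rfl fun s _ => ?_
        exact (integral_prod_of_iIndepFun _ (hgindep r s) (hgmeas r s) (hgint r s)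
          Finset.univ).2
end
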